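/- (Angular estimate, two-dimensional case) Let n > 2 and ν > n be real numbers, let m := 1 − 1/ν, let α > 0, and let P : ℝ → (0,∞) be a C³ function which is 2π-periodic. Define k[P](θ) := ((n-2)/(n-1)) |P''(θ)|² − (n-2) α² |P'(θ)|² and c := ((n-2)/(n-1)) · m(4−3m)/(12(1−m)²) = ((n-2)/(n-1)) · (ν-1)(ν+3)/12. Then ∫₀^{2π} k[P] P^{1-ν} dθ ≥ (n-2)(1/(n-1) − α²) ∫₀^{2π} |P'|² P^{1-ν} dθ + c ∫₀^{2π} (|P'|⁴ / P²) P^{1-ν} dθ. -/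

import Mathlib

open Real intervalIntegral



lemma limH (v : ℝ → ℝ) (d : ℝ) (hv : HasDerivAt v d 0) (h0 : v 0 = 0) :
    Filter.Tendsto (fun ε => (v ε)^2 * (Real.cos ε / Real.sin ε)) (nhdsWithin 0 (Set.Ioi 0)) (nhds 0) := by
  have hslope : Filter.Tendsto (fun ε : ℝ => v ε / ε) (nhdsWithin 0 (Set.Ioi 0)) (nhds d) := by
    have := hasDerivAt_iff_tendsto_slope.mp hv
    have h2 : Filter.Tendsto (slope v 0) (nhdsWithin 0 (Set.Ioi 0)) (nhds d) :=
      this.mono_left (nhdsWithin_mono _ (by intro x hx; exact Set.mem_compl_singleton_iff.mpr (ne_of_gt hx)))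
    refine h2.congr' ?_
    filter_upwards [self_mem_nhdsWithin] with x hx
    simp [slope, h0, sub_zero, inv_mul_eq_div]
  have hsin : Filter.Tendsto (fun ε : ℝ => Real.sin ε / ε) (nhdsWithin 0 (Set.Ioi 0)) (nhds 1) := by
    have := hasDerivAt_iff_tendsto_slope.mp (Real.hasDerivAt_sin 0)
    simp only [Real.cos_zero] at this
    have h2 := this.mono_left (nhdsWithin_mono (0:ℝ) (s := Set.Ioi 0)
      (by intro x hx; exact Set.mem_compl_singleton_iff.mpr (ne_of_gt hx)))
    refine h2.congr' ?_
    filter_upwards [self_mem_nhdsWithin] with x hx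
    simp [slope, Real.sin_zero, sub_zero, inv_mul_eq_div]
  have hsin' : Filter.Tendsto (fun ε : ℝ => ε / Real.sin ε) (nhdsWithin 0 (Set.Ioi 0)) (nhds 1) := by
    have := (hsin.inv₀ one_ne_zero)
    simpa [inv_div] using this
  have hcos : Filter.Tendsto (fun ε : ℝ => ε * Real.cos ε) (nhdsWithin 0 (Set.Ioi 0)) (nhds 0) := by
    have : Filter.Tendsto (fun ε : ℝ => ε * Real.cos ε) (nhds 0) (nhds 0) := by
      have := (continuous_id.mul Real.continuous_cos).tendsto 0
      simpa [Pi.mul_def] using this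
    exact this.mono_left nhdsWithin_le_nhds
  have main : Filter.Tendsto (fun ε : ℝ => (v ε / ε)^2 * (ε / Real.sin ε) * (ε * Real.cos ε))
      (nhdsWithin 0 (Set.Ioi 0)) (nhds 0) := by
    have := ((hslope.pow 2).mul hsin').mul hcos
    simpa using this
  refine main.congr' ?_
  filter_upwards [Ioo_mem_nhdsGT_of_mem (Set.mem_Ico.mpr ⟨le_refl (0:ℝ), Real.pi_pos⟩)] with x hx
  obtain ⟨hx0, hxpi⟩ := hx
  have hs : Real.sin x ≠ 0 := ne_of_gt (Real.sin_pos_of_pos_of_lt_pi hx0 hxpi)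
  field_simp


lemma poincare0 (u u' : ℝ → ℝ) (hu : ∀ x, HasDerivAt u (u' x) x) (hc : Continuous u')
    (h0 : u 0 = 0) (hpi : u π = 0) :
    ∫ x in (0:ℝ)..π, (u x)^2 ≤ ∫ x in (0:ℝ)..π, (u' x)^2 := by
  have hucont : Continuous u := by
    have : Differentiable ℝ u := fun x => (hu x).differentiableAt
    exact this.continuous
  set f : ℝ → ℝ := fun x => (u' x)^2 - (u x)^2 with hf
  have hfcont : Continuous f := (hc.pow 2).sub (hucont.pow 2)
  -- the primitive of f
  set G : ℝ → ℝ := fun y => ∫ x in (0:ℝ)..y, f x with hG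
  have hGcont : Continuous G :=
    intervalIntegral.continuous_primitive (fun a b => hfcont.intervalIntegrable a b) 0
  -- H and its derivative
  set H : ℝ → ℝ := fun x => (u x)^2 * (Real.cos x / Real.sin x) with hH
  set H' : ℝ → ℝ := fun x => 2 * u x * u' x * (Real.cos x / Real.sin x) + (u x)^2 * (-1 / (Real.sin x)^2)
    with hH'
  have hHd : ∀ x ∈ Set.Ioo (0:ℝ) π, HasDerivAt H (H' x) x := by
    intro x hx
    have hs : Real.sin x ≠ 0 := ne_of_gt (Real.sin_pos_of_pos_of_lt_pi hx.1 hx.2)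
    have h1 : HasDerivAt (fun x => (u x)^2) (2 * u x * u' x) x := by
      simpa [mul_comm, mul_assoc, mul_left_comm] using ((hu x).fun_pow 2)
    have hsc : Real.sin x ^2 + Real.cos x ^2 = 1 := Real.sin_sq_add_cos_sq x
    have h2 : HasDerivAt (fun x => Real.cos x / Real.sin x)
        ((-Real.sin x * Real.sin x - Real.cos x * Real.cos x) / (Real.sin x)^2) x :=
      (Real.hasDerivAt_cos x).div (Real.hasDerivAt_sin x) hs
    rw [show (-Real.sin x * Real.sin x - Real.cos x * Real.cos x) / (Real.sin x)^2
        = -1 / (Real.sin x)^2 by rw [show (-Real.sin x * Real.sin x - Real.cos x * Real.cos x) = -1 by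
          linear_combination -hsc]] at h2
    exact h1.mul h2
  have hH'le : ∀ x ∈ Set.Ioo (0:ℝ) π, H' x ≤ f x := by
    intro x hx
    have hs : Real.sin x ≠ 0 := ne_of_gt (Real.sin_pos_of_pos_of_lt_pi hx.1 hx.2)
    have hsc : Real.sin x ^2 + Real.cos x ^2 = 1 := Real.sin_sq_add_cos_sq x
    have key : (u' x)^2 - (u x)^2
        - (2 * u x * u' x * (Real.cos x / Real.sin x) + (u x)^2 * (-1 / (Real.sin x)^2))
        = (u' x - u x * (Real.cos x / Real.sin x))^2 := by
      field_simp
      linear_combination (-(u x)^2) * hsc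
    show 2 * u x * u' x * (Real.cos x / Real.sin x) + (u x)^2 * (-1 / (Real.sin x)^2)
        ≤ (u' x)^2 - (u x)^2
    linarith [key, sq_nonneg (u' x - u x * (Real.cos x / Real.sin x))]
  -- for each small ε, the integral over [ε, π-ε]
  have step : ∀ ε ∈ Set.Ioo (0:ℝ) (π/2), H (π - ε) - H ε ≤ G (π - ε) - G ε := by
    intro ε hε
    have hεπ : ε ≤ π - ε := by
      have := hε.2; nlinarith [Real.pi_pos]
    have hsub : Set.uIcc ε (π - ε) ⊆ Set.Ioo 0 π := by
      rw [Set.uIcc_of_le hεπ]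
      intro x hx
      constructor
      · linarith [hx.1, hε.1]
      · have := hx.2; have := hε.1; linarith
    have hH'contOn : ContinuousOn H' (Set.uIcc ε (π - ε)) := by
      intro x hx
      have hs : Real.sin x ≠ 0 := ne_of_gt (Real.sin_pos_of_pos_of_lt_pi (hsub hx).1 (hsub hx).2)
      apply ContinuousAt.continuousWithinAt
      have : ContinuousAt H' x := by
        rw [hH']
        apply ContinuousAt.add
        · exact (((continuousAt_const.mul hucont.continuousAt).mul hc.continuousAt).mul
            (Real.continuous_cos.continuousAt.div Real.continuous_sin.continuousAt hs))
        · exact (hucont.continuousAt.pow 2).mul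
            (continuousAt_const.div ((Real.continuous_sin.continuousAt).pow 2) (pow_ne_zero 2 hs))
      exact this
    have hint : IntervalIntegrable H' MeasureTheory.volume ε (π - ε) :=
      hH'contOn.intervalIntegrable
    have hftc : ∫ x in ε..(π - ε), H' x = H (π - ε) - H ε :=
      intervalIntegral.integral_eq_sub_of_hasDerivAt (fun x hx => hHd x (hsub hx)) hint
    have hmono : ∫ x in ε..(π - ε), H' x ≤ ∫ x in ε..(π - ε), f x := by
      apply intervalIntegral.integral_mono_on hεπ hint (hfcont.intervalIntegrable _ _)
      intro x hx
      exact hH'le x (hsub (by rw [Set.uIcc_of_le hεπ]; exact hx))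
    have hGdiff : ∫ x in ε..(π - ε), f x = G (π - ε) - G ε := by
      have h1 : G ε + ∫ x in ε..(π-ε), f x = G (π - ε) :=
        intervalIntegral.integral_add_adjacent_intervals (hfcont.intervalIntegrable _ _)
          (hfcont.intervalIntegrable _ _)
      linarith
    rw [← hftc, ← hGdiff]
    exact hmono
  -- limits
  have hlim1 : Filter.Tendsto (fun ε => H (π - ε) - H ε) (nhdsWithin 0 (Set.Ioi 0)) (nhds 0) := by
    have hA : Filter.Tendsto (fun ε => H ε) (nhdsWithin 0 (Set.Ioi 0)) (nhds 0) :=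
      limH u (u' 0) (hu 0) h0
    have hB : Filter.Tendsto (fun ε => H (π - ε)) (nhdsWithin 0 (Set.Ioi 0)) (nhds 0) := by
      have hw : HasDerivAt (fun x => u (π - x)) (u' π * (-1)) 0 := by
        have hinner : HasDerivAt (fun x : ℝ => π - x) (-1) 0 := by
          simpa using (hasDerivAt_id (0:ℝ)).const_sub π
        have h := (hu (π - 0)).comp 0 hinner
        simp only [sub_zero] at h
        exact h
      have := limH (fun x => u (π - x)) (u' π * (-1)) hw (by simpa using hpi)
      have hneg := this.neg
      rw [neg_zero] at hneg
      refine hneg.congr ?_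
      intro x
      simp only [hH]
      rw [Real.cos_pi_sub, Real.sin_pi_sub]
      ring
    simpa using hB.sub hA
  have hlim2 : Filter.Tendsto (fun ε => G (π - ε) - G ε) (nhdsWithin 0 (Set.Ioi 0)) (nhds (G π)) := by
    have hGc : Filter.Tendsto (fun ε => G ε) (nhdsWithin 0 (Set.Ioi 0)) (nhds (G 0)) :=
      (hGcont.tendsto 0).mono_left nhdsWithin_le_nhds
    have hGc2 : Filter.Tendsto (fun ε => G (π - ε)) (nhdsWithin 0 (Set.Ioi 0)) (nhds (G π)) := by
      have h1 : Filter.Tendsto (fun ε : ℝ => π - ε) (nhdsWithin 0 (Set.Ioi 0)) (nhds π) := by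
        have : Filter.Tendsto (fun ε : ℝ => π - ε) (nhds 0) (nhds (π - 0)) :=
          (continuous_const.sub continuous_id).tendsto 0
        simpa using this.mono_left nhdsWithin_le_nhds
      exact (hGcont.tendsto π).comp h1
    have hG0 : G 0 = 0 := by simp [hG]
    have := hGc2.sub hGc
    rw [hG0, sub_zero] at this
    exact this
  have hfin : (0:ℝ) ≤ G π := by
    refine le_of_tendsto_of_tendsto hlim1 hlim2 ?_
    filter_upwards [Ioo_mem_nhdsGT_of_mem
      (show (0:ℝ) ∈ Set.Ico (0:ℝ) (π/2) from ⟨le_refl _, by positivity⟩)] with ε hε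
    exact step ε hε
  have hGπ : G π = (∫ x in (0:ℝ)..π, (u' x)^2) - ∫ x in (0:ℝ)..π, (u x)^2 :=
    intervalIntegral.integral_sub ((hc.pow 2).intervalIntegrable _ _)
      ((hucont.pow 2).intervalIntegrable _ _)
  linarith


lemma poincareA (a : ℝ) (u u' : ℝ → ℝ) (hu : ∀ x, HasDerivAt u (u' x) x) (hc : Continuous u')
    (h0 : u a = 0) (hpi : u (a + π) = 0) :
    ∫ x in a..(a + π), (u x)^2 ≤ ∫ x in a..(a + π), (u' x)^2 := by
  have key := poincare0 (fun x => u (a + x)) (fun x => u' (a + x))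
    (fun x => by
      have hinner : HasDerivAt (fun y : ℝ => a + y) 1 x := by
        simpa using (hasDerivAt_id x).const_add a
      have h := (hu (a + x)).comp x hinner
      simpa [Function.comp_def] using h)
    (hc.comp (continuous_const.add continuous_id))
    (by simpa using h0) (by simpa using hpi)
  have e1 : ∫ x in (0:ℝ)..π, (u (a + x))^2 = ∫ x in a..(a+π), (u x)^2 := by
    have := intervalIntegral.integral_comp_add_left (a := (0:ℝ)) (b := π)
      (fun x => (u x)^2) a
    simpa using this
  have e2 : ∫ x in (0:ℝ)..π, (u' (a + x))^2 = ∫ x in a..(a+π), (u' x)^2 := by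
    have := intervalIntegral.integral_comp_add_left (a := (0:ℝ)) (b := π)
      (fun x => (u' x)^2) a
    simpa using this
  rw [e1, e2] at key
  exact key

lemma wirtinger (g g' : ℝ → ℝ) (hg : ∀ x, HasDerivAt g (g' x) x) (hgc : Continuous g')
    (hper : ∀ x, g (x + 2*π) = g x) (hmean : ∫ x in (0:ℝ)..(2*π), g x = 0) :
    ∫ x in (0:ℝ)..(2*π), (g x)^2 ≤ ∫ x in (0:ℝ)..(2*π), (g' x)^2 := by
  have hgcont : Continuous g := by
    have : Differentiable ℝ g := fun x => (hg x).differentiableAt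
    exact this.continuous
  have hper' : ∀ x, g' (x + 2*π) = g' x := by
    intro x
    have hinner : HasDerivAt (fun y : ℝ => y + 2*π) 1 x := by
      simpa using (hasDerivAt_id x).add_const (2*π)
    have h2 : HasDerivAt (fun y => g (y + 2*π)) (g' (x + 2*π)) x := by
      have h := (hg (x + 2*π)).comp x hinner
      simpa [Function.comp_def] using h
    have h3 : HasDerivAt g (g' (x + 2*π)) x := by
      have : (fun y => g (y + 2*π)) = g := funext hper
      rwa [this] at h2
    exact h3.unique (hg x)
  -- find c with g c = g (c + π)
  obtain ⟨cc, hcc⟩ : ∃ cc, g cc = g (cc + π) := by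
    set φ : ℝ → ℝ := fun t => g t - g (t + π) with hφ
    have hφc : Continuous φ := hgcont.sub (hgcont.comp (continuous_id.add continuous_const))
    have hkey : φ π = - φ 0 := by
      simp only [hφ]
      have : π + π = 0 + 2*π := by ring
      rw [this, hper 0]
      ring
    have h0m : (0:ℝ) ∈ Set.uIcc (φ 0) (φ π) := by
      rw [hkey]
      rcases le_total (φ 0) 0 with h | h
      · exact Set.mem_uIcc.mpr (Or.inl ⟨h, by linarith⟩)
      · exact Set.mem_uIcc.mpr (Or.inr ⟨by linarith, h⟩)
    obtain ⟨cc, _, hcc⟩ := intermediate_value_uIcc (hφc.continuousOn) h0m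
    exact ⟨cc, by simpa [hφ, sub_eq_zero] using hcc⟩
  set v : ℝ := g cc with hv
  set u : ℝ → ℝ := fun x => g x - v with hu
  have hud : ∀ x, HasDerivAt u (g' x) x := fun x => (hg x).sub_const v
  have hu1 : u cc = 0 := by simp [hu, hv]
  have hu2 : u (cc + π) = 0 := by simp [hu, hv, ← hcc]
  have hu3 : u (cc + π + π) = 0 := by
    have : cc + π + π = cc + 2*π := by ring
    rw [this]
    simp [hu, hper cc, hv]
  have A1 := poincareA cc u g' hud hgc hu1 hu2
  have A2 := poincareA (cc + π) u g' hud hgc hu2 hu3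
  have hucont : Continuous u := hgcont.sub continuous_const
  have hi1 : ∀ a b : ℝ, IntervalIntegrable (fun x => (u x)^2) MeasureTheory.volume a b :=
    fun a b => ((hucont.pow 2).intervalIntegrable a b)
  have hi2 : ∀ a b : ℝ, IntervalIntegrable (fun x => (g' x)^2) MeasureTheory.volume a b :=
    fun a b => ((hgc.pow 2).intervalIntegrable a b)
  have hi3 : ∀ a b : ℝ, IntervalIntegrable (fun x => (g x)^2) MeasureTheory.volume a b :=
    fun a b => ((hgcont.pow 2).intervalIntegrable a b)
  have sum1 : ∫ x in cc..(cc + 2*π), (u x)^2 ≤ ∫ x in cc..(cc + 2*π), (g' x)^2 := by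
    have e : cc + π + π = cc + 2*π := by ring
    rw [e] at A2
    have l1 : ∫ x in cc..(cc+2*π), (u x)^2
        = (∫ x in cc..(cc+π), (u x)^2) + ∫ x in (cc+π)..(cc+2*π), (u x)^2 :=
      (intervalIntegral.integral_add_adjacent_intervals (hi1 _ _) (hi1 _ _)).symm
    have l2 : ∫ x in cc..(cc+2*π), (g' x)^2
        = (∫ x in cc..(cc+π), (g' x)^2) + ∫ x in (cc+π)..(cc+2*π), (g' x)^2 :=
      (intervalIntegral.integral_add_adjacent_intervals (hi2 _ _) (hi2 _ _)).symm
    rw [l1, l2]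
    exact add_le_add A1 A2
  -- periodic shifts
  have per_shift : ∀ (f : ℝ → ℝ), (∀ x, f (x + 2*π) = f x) →
      (∀ a b : ℝ, IntervalIntegrable f MeasureTheory.volume a b) →
      ∫ x in cc..(cc + 2*π), f x = ∫ x in (0:ℝ)..(2*π), f x := by
    intro f hf _
    have hp : Function.Periodic f (2*π) := hf
    have := hp.intervalIntegral_add_eq cc 0
    simpa using this
  have s1 : ∫ x in cc..(cc + 2*π), (g x)^2 = ∫ x in (0:ℝ)..(2*π), (g x)^2 :=
    per_shift _ (fun x => by rw [hper]) hi3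
  have s2 : ∫ x in cc..(cc + 2*π), (g' x)^2 = ∫ x in (0:ℝ)..(2*π), (g' x)^2 :=
    per_shift _ (fun x => by rw [hper']) hi2
  have s3 : ∫ x in cc..(cc + 2*π), g x = ∫ x in (0:ℝ)..(2*π), g x :=
    per_shift _ hper (fun a b => hgcont.intervalIntegrable a b)
  -- expand ∫ u²
  have expand : ∫ x in cc..(cc + 2*π), (u x)^2
      = (∫ x in cc..(cc + 2*π), (g x)^2) - 2*v*(∫ x in cc..(cc + 2*π), g x) + (2*π)*v^2 := by
    have e : (fun x => (u x)^2) = fun x => ((g x)^2 - (2*v) * g x + v^2) := by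
      funext x; simp only [hu]; ring
    rw [e]
    rw [intervalIntegral.integral_add (f := fun x => (g x)^2 - (2*v) * g x) (g := fun _ => v^2) (((hgcont.pow 2).sub
      (continuous_const.mul hgcont)).intervalIntegrable _ _)
      (intervalIntegrable_const)]
    rw [intervalIntegral.integral_sub (g := fun x => (2*v) * g x) (hi3 _ _) ((continuous_const.mul hgcont).intervalIntegrable _ _)]
    rw [intervalIntegral.integral_const_mul]
    rw [intervalIntegral.integral_const]
    simp
  rw [expand, s1, s2, s3, hmean] at sum1
  have : (0:ℝ) ≤ 2*π*v^2 := by positivity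
  linarith


noncomputable section

/-- `k[P](θ) = ((n-2)/(n-1)) |P''(θ)|² − (n-2) α² |P'(θ)|²`. -/
def kP (n α : ℝ) (P : ℝ → ℝ) (θ : ℝ) : ℝ :=
  ((n-2)/(n-1)) * |deriv (deriv P) θ|^2 - (n-2) * α^2 * |deriv P θ|^2

/-- The angular estimate in the two-dimensional case: with
`m = 1 − 1/ν` and `c = ((n-2)/(n-1))·(ν-1)(ν+3)/12`,
`∫ k[P] P^{1-ν} ≥ (n-2)(1/(n-1) − α²) ∫ |P'|² P^{1-ν} + c ∫ (|P'|⁴/P²) P^{1-ν}`. -/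
theorem angular_estimate_dim2
    (n ν m α : ℝ) (hn : 2 < n) (hν : n < ν) (hm : m = 1 - 1/ν) (hα : 0 < α)
    (c : ℝ) (hc : c = ((n-2)/(n-1)) * (m*(4-3*m)/(12*(1-m)^2)))
    (P : ℝ → ℝ) (hP : ContDiff ℝ 3 P)
    (hpos : ∀ θ : ℝ, 0 < P θ)
    (hper : ∀ θ : ℝ, P (θ + 2*π) = P θ) :
    (n-2) * (1/(n-1) - α^2) *
        (∫ θ in (0:ℝ)..(2*π), |deriv P θ|^2 * P θ ^ (1 - ν))
      + c * ∫ θ in (0:ℝ)..(2*π), (|deriv P θ|^4 / P θ^2) * P θ ^ (1 - ν)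
    ≤ ∫ θ in (0:ℝ)..(2*π), kP n α P θ * P θ ^ (1 - ν) := by
  have hP2 : ContDiff ℝ 2 (deriv P) := by
    rw [show (3 : WithTop ℕ∞) = 2 + 1 from rfl] at hP
    exact (contDiff_succ_iff_deriv.mp hP).2.2
  have hPdiff : Differentiable ℝ P := hP.differentiable (by norm_num)
  have hP'diff : Differentiable ℝ (deriv P) := hP2.differentiable (by norm_num)
  have hd1 : ∀ x, HasDerivAt P (deriv P x) x := fun x => (hPdiff x).hasDerivAt
  have hd2 : ∀ x, HasDerivAt (deriv P) (deriv (deriv P) x) x := fun x => (hP'diff x).hasDerivAt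
  have cP : Continuous P := hPdiff.continuous
  have cP' : Continuous (deriv P) := hP'diff.continuous
  have cP'' : Continuous (deriv (deriv P)) := hP2.continuous_deriv (by norm_num)
  have hne : ∀ x, P x ≠ 0 := fun x => (hpos x).ne'
  have crpow : ∀ r : ℝ, Continuous fun θ => P θ ^ r :=
    fun r => cP.rpow_const (fun x => Or.inl (hne x))
  -- periodicity of the derivative
  have hperP' : ∀ x, deriv P (x + 2*π) = deriv P x := by
    intro x
    have hinner : HasDerivAt (fun y : ℝ => y + 2*π) 1 x := by
      simpa using (hasDerivAt_id x).add_const (2*π)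
    have h2 : HasDerivAt (fun y => P (y + 2*π)) (deriv P (x + 2*π)) x := by
      have h := (hd1 (x + 2*π)).comp x hinner
      simpa [Function.comp_def] using h
    have h3 : HasDerivAt P (deriv P (x + 2*π)) x := by
      have he : (fun y => P (y + 2*π)) = P := funext hper
      rwa [he] at h2
    exact h3.unique (hd1 x)
  -- derivative of rpow composed with P
  have hrd : ∀ (r : ℝ) (x : ℝ), HasDerivAt (fun θ => P θ ^ r) (r * P x ^ (r-1) * deriv P x) x := by
    intro r x
    have h := (Real.hasDerivAt_rpow_const (x := P x) (p := r) (Or.inl (hne x))).comp x (hd1 x)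
    simpa [Function.comp_def, mul_assoc] using h
  -- rpow multiplication
  have hmul : ∀ (a b : ℝ) (x : ℝ), P x ^ a * P x ^ b = P x ^ (a+b) :=
    fun a b x => (Real.rpow_add (hpos x) a b).symm
  -- the auxiliary function g
  set g : ℝ → ℝ := fun θ => deriv P θ * P θ ^ ((1-ν)/2) with hg
  set g' : ℝ → ℝ := fun θ => deriv (deriv P) θ * P θ ^ ((1-ν)/2)
      + deriv P θ * ((1-ν)/2 * P θ ^ ((1-ν)/2 - 1) * deriv P θ) with hg'
  have hgd : ∀ x, HasDerivAt g (g' x) x := fun x => (hd2 x).mul (hrd ((1-ν)/2) x)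
  have hgc : Continuous g := cP'.mul (crpow _)
  have hg'c : Continuous g' := (cP''.mul (crpow _)).add
    (cP'.mul ((continuous_const.mul (crpow _)).mul cP'))
  have hgper : ∀ x, g (x + 2*π) = g x := by
    intro x
    simp only [hg]
    rw [hperP' x, hper x]
  -- g has mean zero
  have hmean : ∫ x in (0:ℝ)..(2*π), g x = 0 := by
    by_cases h3 : ν = 3
    · have hgeq : ∀ x, HasDerivAt (fun θ => Real.log (P θ)) (g x) x := by
        intro x
        have h := (Real.hasDerivAt_log (hne x)).comp x (hd1 x)
        have hge : g x = deriv P x * (P x)⁻¹ := by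
          simp only [hg]
          rw [show ((1-ν)/2 : ℝ) = -1 by rw [h3]; norm_num, Real.rpow_neg_one]
        rw [hge]
        simpa [Function.comp_def, mul_comm] using h
      rw [intervalIntegral.integral_eq_sub_of_hasDerivAt (fun x _ => hgeq x)
        (hgc.intervalIntegrable _ _)]
      rw [show (2*π:ℝ) = 0 + 2*π by ring, hper 0]
      ring
    · have hne3 : (3:ℝ) - ν ≠ 0 := sub_ne_zero.mpr fun hh => h3 hh.symm
      have hgeq : ∀ x, HasDerivAt (fun θ => (2/(3-ν)) * P θ ^ ((3-ν)/2)) (g x) x := by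
        intro x
        have h := (hrd ((3-ν)/2) x).const_mul (2/(3-ν))
        refine h.congr_deriv ?_
        simp only [hg]
        rw [show ((3-ν)/2 - 1 : ℝ) = (1-ν)/2 by ring]
        field_simp
      rw [intervalIntegral.integral_eq_sub_of_hasDerivAt (fun x _ => hgeq x)
        (hgc.intervalIntegrable _ _)]
      rw [show (2*π:ℝ) = 0 + 2*π by ring, hper 0]
      ring
  -- integrals
  set I1 : ℝ := ∫ θ in (0:ℝ)..(2*π), (deriv P θ)^2 * P θ ^ (1-ν) with hI1
  set I2 : ℝ := ∫ θ in (0:ℝ)..(2*π), (deriv P θ)^4 * P θ ^ (-1-ν) with hI2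
  set J : ℝ := ∫ θ in (0:ℝ)..(2*π), (deriv (deriv P) θ)^2 * P θ ^ (1-ν) with hJ
  set X : ℝ := ∫ θ in (0:ℝ)..(2*π), deriv (deriv P) θ * (deriv P θ)^2 * P θ ^ (-ν) with hX
  have cI1 : Continuous fun θ => (deriv P θ)^2 * P θ ^ (1-ν) := (cP'.pow 2).mul (crpow _)
  have cI2 : Continuous fun θ => (deriv P θ)^4 * P θ ^ (-1-ν) := (cP'.pow 4).mul (crpow _)
  have cJ : Continuous fun θ => (deriv (deriv P) θ)^2 * P θ ^ (1-ν) := (cP''.pow 2).mul (crpow _)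
  have cX : Continuous fun θ => deriv (deriv P) θ * (deriv P θ)^2 * P θ ^ (-ν) :=
    (cP''.mul (cP'.pow 2)).mul (crpow _)
  -- ∫ g² = I1
  have hgsq : ∫ θ in (0:ℝ)..(2*π), (g θ)^2 = I1 := by
    rw [hI1]
    apply intervalIntegral.integral_congr
    intro x _
    simp only [hg]
    rw [mul_pow, pow_two (P x ^ ((1-ν)/2 : ℝ)), hmul,
      show ((1-ν)/2 + (1-ν)/2 : ℝ) = 1-ν by ring]
  -- ∫ g'² decomposition
  have hsplit : ∫ θ in (0:ℝ)..(2*π), (g' θ)^2 = J + ((1-ν)*X + ((1-ν)^2/4)*I2) := by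
    have e1 : ∀ x, P x ^ ((1-ν)/2 : ℝ) * P x ^ ((1-ν)/2 : ℝ) = P x ^ (1-ν : ℝ) := by
      intro x; rw [hmul, show ((1-ν)/2 + (1-ν)/2 : ℝ) = 1-ν by ring]
    have e2 : ∀ x, P x ^ ((1-ν)/2 : ℝ) * P x ^ ((1-ν)/2 - 1 : ℝ) = P x ^ (-ν : ℝ) := by
      intro x; rw [hmul, show ((1-ν)/2 + ((1-ν)/2 - 1) : ℝ) = -ν by ring]
    have e3 : ∀ x, P x ^ ((1-ν)/2 - 1 : ℝ) * P x ^ ((1-ν)/2 - 1 : ℝ) = P x ^ (-1-ν : ℝ) := by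
      intro x; rw [hmul, show (((1-ν)/2 - 1) + ((1-ν)/2 - 1) : ℝ) = -1-ν by ring]
    have hpt : (fun θ => (g' θ)^2) = fun θ =>
        (deriv (deriv P) θ)^2 * P θ ^ (1-ν)
        + ((1-ν) * (deriv (deriv P) θ * (deriv P θ)^2 * P θ ^ (-ν))
          + ((1-ν)^2/4) * ((deriv P θ)^4 * P θ ^ (-1-ν))) := by
      funext x
      simp only [hg']
      linear_combination (deriv (deriv P) x)^2 * e1 x
        + (1-ν) * (deriv (deriv P) x) * (deriv P x)^2 * e2 x
        + ((1-ν)^2/4) * (deriv P x)^4 * e3 x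
    rw [hpt]
    rw [intervalIntegral.integral_add (g := fun θ => (1-ν) * (deriv (deriv P) θ * (deriv P θ)^2 * P θ ^ (-ν))
          + ((1-ν)^2/4) * ((deriv P θ)^4 * P θ ^ (-1-ν))) (cJ.intervalIntegrable _ _)
      (((continuous_const.mul cX).add (continuous_const.mul cI2)).intervalIntegrable _ _)]
    rw [intervalIntegral.integral_add (f := fun θ => (1-ν) * (deriv (deriv P) θ * (deriv P θ)^2 * P θ ^ (-ν)))
      (g := fun θ => ((1-ν)^2/4) * ((deriv P θ)^4 * P θ ^ (-1-ν))) ((continuous_const.mul cX).intervalIntegrable _ _)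
      ((continuous_const.mul cI2).intervalIntegrable _ _)]
    rw [intervalIntegral.integral_const_mul, intervalIntegral.integral_const_mul]
  -- integration by parts identity: X = (ν/3) I2
  have hXI : X = (ν/3) * I2 := by
    have hWd : ∀ x, HasDerivAt (fun θ => (1/3)*(deriv P θ)^3 * P θ ^ (-ν : ℝ))
        (deriv (deriv P) x * (deriv P x)^2 * P x ^ (-ν : ℝ)
          - (ν/3) * ((deriv P x)^4 * P x ^ (-1-ν : ℝ))) x := by
      intro x
      have h1 : HasDerivAt (fun θ => (1/3)*(deriv P θ)^3)
          ((1/3)*(3*(deriv P x)^2 * deriv (deriv P) x)) x := by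
        have := ((hd2 x).fun_pow 3).const_mul (1/3 : ℝ)
        refine this.congr_deriv ?_
        norm_num
      have h2 := hrd (-ν) x
      have h := h1.fun_mul h2
      rw [show (-ν - 1 : ℝ) = -1-ν by ring] at h
      refine h.congr_deriv ?_
      rw [show ((deriv P x)^4 * P x ^ (-1-ν : ℝ)) = (deriv P x)^3 * P x ^ (-1-ν : ℝ) * deriv P x
        by ring]
      ring
    have hzero : ∫ θ in (0:ℝ)..(2*π),
        (deriv (deriv P) θ * (deriv P θ)^2 * P θ ^ (-ν : ℝ)
          - (ν/3) * ((deriv P θ)^4 * P θ ^ (-1-ν : ℝ))) = 0 := by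
      rw [intervalIntegral.integral_eq_sub_of_hasDerivAt (fun x _ => hWd x)
        ((cX.sub (continuous_const.mul cI2)).intervalIntegrable _ _)]
      rw [show (2*π:ℝ) = 0 + 2*π by ring, hper 0, hperP' 0]
      ring
    rw [intervalIntegral.integral_sub (g := fun θ => (ν/3) * ((deriv P θ)^4 * P θ ^ (-1-ν : ℝ))) (cX.intervalIntegrable _ _)
      ((continuous_const.mul cI2).intervalIntegrable _ _),
      intervalIntegral.integral_const_mul] at hzero
    rw [← hX, ← hI2] at hzero
    linarith
  -- Wirtinger
  have hw := wirtinger g g' hgd hg'c hgper hmean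
  rw [hgsq, hsplit, hXI] at hw
  have hJge : I1 + ((ν-1)*(ν+3)/12) * I2 ≤ J := by
    have hco : (1-ν)*((ν/3)*I2) + ((1-ν)^2/4)*I2 = -(((ν-1)*(ν+3)/12)*I2) := by ring
    linarith
  -- rewrite target integrals
  have T1 : ∫ θ in (0:ℝ)..(2*π), |deriv P θ|^2 * P θ ^ (1 - ν) = I1 := by
    rw [hI1]
    apply intervalIntegral.integral_congr
    intro x _
    simp only [sq_abs]
  have T2 : ∫ θ in (0:ℝ)..(2*π), (|deriv P θ|^4 / P θ^2) * P θ ^ (1 - ν) = I2 := by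
    rw [hI2]
    apply intervalIntegral.integral_congr
    intro x _
    have habs : |deriv P x|^4 = (deriv P x)^4 := by
      rw [← abs_pow]
      exact abs_of_nonneg (by positivity)
    have hPx : P x ^ (-1-ν : ℝ) = P x ^ (1-ν : ℝ) / P x ^ (2:ℕ) := by
      rw [← Real.rpow_natCast (P x) 2, ← Real.rpow_sub (hpos x),
        show ((1-ν) - ((2:ℕ):ℝ) : ℝ) = -1-ν by push_cast; ring]
    simp only [habs, hPx]
    ring
  have T3 : ∫ θ in (0:ℝ)..(2*π), kP n α P θ * P θ ^ (1 - ν)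
      = ((n-2)/(n-1)) * J - ((n-2)*α^2) * I1 := by
    have hpt : (fun θ => kP n α P θ * P θ ^ (1-ν)) = fun θ =>
        ((n-2)/(n-1)) * ((deriv (deriv P) θ)^2 * P θ ^ (1-ν))
        - ((n-2)*α^2) * ((deriv P θ)^2 * P θ ^ (1-ν)) := by
      funext x
      unfold kP
      rw [sq_abs, sq_abs]
      ring
    rw [hpt]
    rw [intervalIntegral.integral_sub (f := fun θ => ((n-2)/(n-1)) * ((deriv (deriv P) θ)^2 * P θ ^ (1-ν)))
      (g := fun θ => ((n-2)*α^2) * ((deriv P θ)^2 * P θ ^ (1-ν))) ((continuous_const.mul cJ).intervalIntegrable _ _)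
      ((continuous_const.mul cI1).intervalIntegrable _ _),
      intervalIntegral.integral_const_mul, intervalIntegral.integral_const_mul, ← hJ, ← hI1]
  rw [T1, T2, T3]
  -- final algebra
  have hν0 : ν ≠ 0 := by intro h; rw [h] at hν; linarith
  have hcK : c = ((n-2)/(n-1)) * ((ν-1)*(ν+3)/12) := by
    rw [hc, hm]
    congr 1
    field_simp
    ring
  have hq : (0:ℝ) ≤ (n-2)/(n-1) := div_nonneg (by linarith) (by linarith)
  have hmul2 := mul_le_mul_of_nonneg_left hJge hq
  have hexp : ((n-2)/(n-1))*(I1 + ((ν-1)*(ν+3)/12)*I2)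
      = ((n-2)/(n-1))*I1 + (((n-2)/(n-1))*((ν-1)*(ν+3)/12))*I2 := by ring
  have hco2 : (n-2)*(1/(n-1)-α^2)*I1 = ((n-2)/(n-1))*I1 - (n-2)*α^2*I1 := by ring
  rw [hcK]
  linarith
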